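/- arXiv:2404.05727 — 2 statements merged into one kernel-verified Lean document; each statement's English description precedes it below -/
import Mathlib

section
/- Let I ⊆ ℤ/d be a nonempty subset. Then there exist rational numbers a_J, indexed by the subsets J ⊆ ℤ/d with |J| = |I|, such that L_I = Σ_{|J| = |I|} a_J · N_J in R, such that a_I = p^{d−|I|} / (p^d + (−1)^{|I|}), and such that for every J ≠ I with |J| = |I| and a_J ≠ 0 there is an integer e with 0 ≤ e ≤ d − |I| − 1 and a_J = p^e / (p^d + (−1)^{|I|}). -/
open MvPolynomial Finset

set_option linter.unusedSectionVars false
set_option maxHeartbeats 1000000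

noncomputable section

/-- The ideal of `ℚ[x_i : i ∈ ℤ/d]` generated by the squares of the variables. -/
def sqIdeal (d : ℕ) : Ideal (MvPolynomial (ZMod d) ℚ) :=
  Ideal.span (Set.range fun i : ZMod d => (X i) ^ 2)

/-- The ring `R = ℚ[x_i : i ∈ ℤ/d]/(x_i²)`. -/
abbrev ZipRing (d : ℕ) := MvPolynomial (ZMod d) ℚ ⧸ sqIdeal d

/-- The class `l_i` of the variable `x_i` in `R`. -/
def lcl (d : ℕ) (i : ZMod d) : ZipRing d := Ideal.Quotient.mk (sqIdeal d) (X i)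

/-- The Hodge–Chern monomial `L_I = ∏_{i ∈ I} l_i`. -/
def Lmon (d : ℕ) (I : Finset (ZMod d)) : ZipRing d := ∏ i ∈ I, lcl d i

/-- `N_i = p·l_i − l_{i+1}`. -/
def Nelt (d p : ℕ) (i : ZMod d) : ZipRing d := (p : ZipRing d) * lcl d i - lcl d (i + 1)

/-- `P_i = p·l_i + l_{i+1}`. -/
def Pelt (d p : ℕ) (i : ZMod d) : ZipRing d := (p : ZipRing d) * lcl d i + lcl d (i + 1)

/-- The strata class `N_I = ∏_{i ∈ I} N_i`. -/
def Nmon (d p : ℕ) (I : Finset (ZMod d)) : ZipRing d := ∏ i ∈ I, Nelt d p i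

/-- `P_I = ∏_{i ∈ I} P_i`. -/
def Pmon (d p : ℕ) (I : Finset (ZMod d)) : ZipRing d := ∏ i ∈ I, Pelt d p i

section Aux
variable {d : ℕ} [NeZero d] {I : Finset (ZMod d)}

lemma lsq (j : ZMod d) : lcl d j * lcl d j = 0 := by
  have h : (X j : MvPolynomial (ZMod d) ℚ) ^ 2 ∈ sqIdeal d := Ideal.subset_span ⟨j, rfl⟩
  have : lcl d j * lcl d j = Ideal.Quotient.mk (sqIdeal d) ((X j) ^ 2) := by
    rw [sq]; rfl
  rw [this, Ideal.Quotient.eq_zero_iff_mem]; exact h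

lemma exists_fwd (hI : I.Nonempty) (x : ZMod d) : ∃ t : ℕ, x + ((t + 1 : ℕ) : ZMod d) ∈ I := by
  obtain ⟨y, hy⟩ := hI
  refine ⟨(y - x).val + (d - 1), ?_⟩
  have hd : d - 1 + 1 = d := Nat.succ_pred_eq_of_pos (NeZero.pos d)
  have : ((y - x).val + (d - 1) + 1 : ℕ) = ((y - x).val + d : ℕ) := by omega
  rw [this]
  push_cast
  rw [ZMod.natCast_self, ZMod.natCast_val, ZMod.cast_id]
  simpa using hy

lemma exists_bwd (hI : I.Nonempty) (x : ZMod d) : ∃ s : ℕ, x - (s : ZMod d) ∈ I := by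
  obtain ⟨y, hy⟩ := hI
  refine ⟨(x - y).val, ?_⟩
  rw [ZMod.natCast_val, ZMod.cast_id]
  simpa using hy

/-- distance to next element of `I` strictly ahead, minus one -/
def nu (hI : I.Nonempty) (x : ZMod d) : ℕ := Nat.find (exists_fwd hI x)

def mu (hI : I.Nonempty) (x : ZMod d) : ℕ := Nat.find (exists_bwd hI x)

/-- the element of `I` whose gap contains `x` -/
def prv (hI : I.Nonempty) (x : ZMod d) : ZMod d := x - (mu hI x : ZMod d)

/-- next element of `I` strictly after `x` -/
def nxt (hI : I.Nonempty) (x : ZMod d) : ZMod d := x + ((nu hI x + 1 : ℕ) : ZMod d)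

lemma nxt_mem (hI : I.Nonempty) (x : ZMod d) : nxt hI x ∈ I := Nat.find_spec (exists_fwd hI x)

lemma nu_min (hI : I.Nonempty) (x : ZMod d) {m : ℕ} (hm : m < nu hI x) :
    x + ((m + 1 : ℕ) : ZMod d) ∉ I := Nat.find_min (exists_fwd hI x) hm

lemma prv_mem (hI : I.Nonempty) (x : ZMod d) : prv hI x ∈ I := Nat.find_spec (exists_bwd hI x)

lemma mu_min (hI : I.Nonempty) (x : ZMod d) {m : ℕ} (hm : m < mu hI x) :
    x - (m : ZMod d) ∉ I := Nat.find_min (exists_bwd hI x) hm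

lemma nu_lt (hI : I.Nonempty) (x : ZMod d) : nu hI x < d := by
  obtain ⟨t, ht, hmem⟩ : ∃ t, t ≤ d - 1 ∧ x + ((t + 1 : ℕ) : ZMod d) ∈ I := by
    obtain ⟨y, hy⟩ := hI
    by_cases h : y = x
    · refine ⟨d - 1, le_refl _, ?_⟩
      have : (d - 1 + 1 : ℕ) = d := Nat.succ_pred_eq_of_pos (NeZero.pos d)
      rw [this, ZMod.natCast_self, add_zero, ← h]; exact hy
    · refine ⟨(y - x).val - 1, by
        have := ZMod.val_lt (y - x); omega, ?_⟩
      have hne : (y - x).val ≠ 0 := by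
        simp only [ne_eq, ZMod.val_eq_zero, sub_eq_zero]; exact h
      have : ((y - x).val - 1 + 1 : ℕ) = (y - x).val := by omega
      rw [this, ZMod.natCast_val, ZMod.cast_id]
      simpa using hy
  have hd := NeZero.pos d
  calc nu hI x ≤ t := Nat.find_le hmem
    _ ≤ d - 1 := ht
    _ < d := by omega

lemma cast_inj_lt {a b : ℕ} (ha : a < d) (hb : b < d) (h : (a : ZMod d) = b) : a = b := by
  have := congrArg ZMod.val h
  rwa [ZMod.val_cast_of_lt ha, ZMod.val_cast_of_lt hb] at this

lemma nu_shift (hI : I.Nonempty) (x : ZMod d) {k : ℕ} (hk : k ≤ nu hI x) :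
    nu hI (x + (k : ZMod d)) = nu hI x - k := by
  set n := nu hI x with hn
  have hub : nu hI (x + (k : ZMod d)) ≤ n - k := by
    have hmem : (x + (k : ZMod d)) + ((n - k + 1 : ℕ) : ZMod d) ∈ I := by
      have h1 : ((k : ℕ) : ZMod d) + ((n - k + 1 : ℕ) : ZMod d) = ((n + 1 : ℕ) : ZMod d) := by
        rw [← Nat.cast_add]; congr 1; omega
      rw [add_assoc, h1]
      exact nxt_mem hI x
    exact Nat.find_le hmem
  have hlb : ¬ nu hI (x + (k : ZMod d)) < n - k := by
    intro hs
    set s := nu hI (x + (k : ZMod d)) with hsdef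
    have hmem : (x + (k : ZMod d)) + ((s + 1 : ℕ) : ZMod d) ∈ I := nxt_mem hI _
    have h1 : x + ((k : ℕ) : ZMod d) + ((s + 1 : ℕ) : ZMod d)
        = x + ((k + s + 1 : ℕ) : ZMod d) := by
      rw [add_assoc, ← Nat.cast_add]; ring_nf
    rw [h1] at hmem
    exact nu_min hI x (m := k + s) (by omega) hmem
  omega

/-- the gap starting at `i` -/
def gap (hI : I.Nonempty) (i : ZMod d) : Finset (ZMod d) :=
  (range (nu hI i + 1)).image (fun k : ℕ => i + (k : ZMod d))

lemma prv_of_mem (hI : I.Nonempty) {i : ZMod d} (hi : i ∈ I) : prv hI i = i := by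
  have h0 : mu hI i ≤ 0 := Nat.find_le (by simpa using hi)
  have : mu hI i = 0 := Nat.le_zero.mp h0
  simp [prv, this]

lemma prv_add (hI : I.Nonempty) {i : ZMod d} (hi : i ∈ I) {k : ℕ} (hk : k ≤ nu hI i) :
    prv hI (i + (k : ZMod d)) = i := by
  set x := i + (k : ZMod d) with hx
  have hmu : mu hI x ≤ k := Nat.find_le (by simp [hx, hi])
  have hprv : prv hI x = i + ((k - mu hI x : ℕ) : ZMod d) := by
    rw [prv, hx]
    rw [show ((k - mu hI x : ℕ) : ZMod d) = (k : ZMod d) - (mu hI x : ZMod d) by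
      rw [Nat.cast_sub hmu]]
    ring
  by_cases hm : k - mu hI x = 0
  · rw [hprv, hm]; simp
  · exfalso
    have hmem : prv hI x ∈ I := prv_mem hI x
    rw [hprv] at hmem
    have hlt : k - mu hI x - 1 < nu hI i := by omega
    have : i + ((k - mu hI x - 1 + 1 : ℕ) : ZMod d) ∈ I := by
      rw [show k - mu hI x - 1 + 1 = k - mu hI x by omega]; exact hmem
    exact nu_min hI i hlt this

lemma mem_gap_iff (hI : I.Nonempty) {i : ZMod d} (hi : i ∈ I) {x : ZMod d} :
    x ∈ gap hI i ↔ prv hI x = i := by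
  constructor
  · rintro hx
    rw [gap, mem_image] at hx
    obtain ⟨k, hk, rfl⟩ := hx
    rw [mem_range] at hk
    exact prv_add hI hi (by omega)
  · intro hprv
    obtain ⟨m, hm⟩ : ∃ m, mu hI x = m := ⟨_, rfl⟩
    have hx : x = i + ((m : ℕ) : ZMod d) := by
      rw [← hprv, prv, hm]; ring
    have hmu : m ≤ nu hI i := by
      by_contra hgt
      push_neg at hgt
      have hs : m - (nu hI i + 1) < mu hI x := by omega
      apply mu_min hI x hs
      have heq : x - ((m - (nu hI i + 1) : ℕ) : ZMod d) = i + ((nu hI i + 1 : ℕ) : ZMod d) := by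
        rw [hx, show ((m : ℕ) : ZMod d)
            = ((m - (nu hI i + 1) : ℕ) : ZMod d) + ((nu hI i + 1 : ℕ) : ZMod d) by
          rw [← Nat.cast_add]; congr 1; omega]
        ring
      rw [heq]
      exact nxt_mem hI i
    rw [gap, mem_image]
    refine ⟨m, mem_range.mpr ?_, hx.symm⟩
    omega

lemma gap_rep (hI : I.Nonempty) {i : ZMod d} {x : ZMod d} (hx : x ∈ gap hI i) :
    ∃ k : ℕ, k ≤ nu hI i ∧ x = i + (k : ZMod d) ∧ nu hI x = nu hI i - k := by
  rw [gap, mem_image] at hx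
  obtain ⟨k, hk, rfl⟩ := hx
  rw [mem_range] at hk
  exact ⟨k, by omega, rfl, nu_shift hI i (by omega)⟩

lemma self_mem_gap (hI : I.Nonempty) (i : ZMod d) : i ∈ gap hI i := by
  rw [gap, mem_image]
  exact ⟨0, mem_range.mpr (by omega), by simp⟩

lemma gap_inj (hI : I.Nonempty) (i : ZMod d) :
    Set.InjOn (fun k : ℕ => i + (k : ZMod d)) (range (nu hI i + 1)) := by
  intro k1 h1 k2 h2 h
  simp only [coe_range, Set.mem_Iio] at h1 h2
  have hd := nu_lt hI i
  have : (k1 : ZMod d) = (k2 : ZMod d) := by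
    have := h
    simpa using this
  exact cast_inj_lt (by omega) (by omega) this

lemma card_gap (hI : I.Nonempty) (i : ZMod d) : (gap hI i).card = nu hI i + 1 := by
  rw [gap, card_image_of_injOn (by exact_mod_cast gap_inj hI i), card_range]

lemma gap_eq_filter (hI : I.Nonempty) {i : ZMod d} (hi : i ∈ I) :
    gap hI i = univ.filter (fun x => prv hI x = i) := by
  ext x
  simp only [mem_filter, mem_univ, true_and]
  exact mem_gap_iff hI hi

lemma sum_gaplen (hI : I.Nonempty) : ∑ i ∈ I, (nu hI i + 1) = d := by
  have h := card_eq_sum_card_fiberwise (f := prv hI) (s := (univ : Finset (ZMod d)))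
    (t := I) (fun x _ => prv_mem hI x)
  have hcard : (univ : Finset (ZMod d)).card = d := by
    simp [ZMod.card d]
  rw [hcard] at h
  refine Eq.trans (sum_congr rfl fun i hi => ?_) h.symm
  rw [← card_gap hI i, gap_eq_filter hI hi]

lemma card_le (hI : I.Nonempty) : I.card ≤ d := by
  have h := sum_gaplen hI
  calc I.card = ∑ _i ∈ I, 1 := by simp
    _ ≤ ∑ i ∈ I, (nu hI i + 1) := sum_le_sum (fun i _ => by omega)
    _ = d := h

lemma sum_nu (hI : I.Nonempty) : ∑ i ∈ I, nu hI i = d - I.card := by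
  have h := sum_gaplen hI
  have : ∑ i ∈ I, (nu hI i + 1) = (∑ i ∈ I, nu hI i) + I.card := by
    rw [sum_add_distrib]; simp
  omega

lemma nxt_inj (hI : I.Nonempty) : Set.InjOn (nxt hI) I := by
  intro i hi j hj h
  have key : ∀ a : ZMod d, a ∈ I → prv hI (nxt hI a + (-1 : ZMod d)) = a := by
    intro a ha
    have : nxt hI a + (-1 : ZMod d) = a + ((nu hI a : ℕ) : ZMod d) := by
      rw [nxt]; push_cast; ring
    rw [this]
    exact prv_add hI ha (le_refl _)
  rw [← key i hi, ← key j hj, h]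

lemma nxt_image (hI : I.Nonempty) : I.image (nxt hI) = I := by
  apply eq_of_subset_of_card_le
  · intro x hx
    rw [mem_image] at hx
    obtain ⟨i, _, rfl⟩ := hx
    exact nxt_mem hI i
  · rw [card_image_of_injOn (nxt_inj hI)]

lemma prod_lcl_nxt (hI : I.Nonempty) : ∏ i ∈ I, lcl d (nxt hI i) = ∏ i ∈ I, lcl d i := by
  conv_rhs => rw [← nxt_image hI]
  rw [prod_image (fun x hx y hy h => nxt_inj hI hx hy h)]

lemma telescope (p : ℕ) (g : ℕ) (i : ZMod d) :
    ∑ k ∈ range g, (p : ZipRing d) ^ (g - 1 - k) * Nelt d p (i + (k : ZMod d))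
      = (p : ZipRing d) ^ g * lcl d i - lcl d (i + (g : ZMod d)) := by
  induction g generalizing i with
  | zero => simp
  | succ g ih =>
    rw [Finset.sum_range_succ']
    have h0 : (p : ZipRing d) ^ (g + 1 - 1 - 0) * Nelt d p (i + ((0 : ℕ) : ZMod d))
        = (p : ZipRing d) ^ g * ((p : ZipRing d) * lcl d i - lcl d (i + 1)) := by
      simp [Nelt]
    have h1 : ∀ k, (p : ZipRing d) ^ (g + 1 - 1 - (k + 1)) * Nelt d p (i + ((k + 1 : ℕ) : ZMod d))
        = (p : ZipRing d) ^ (g - 1 - k) * Nelt d p ((i + 1) + (k : ZMod d)) := by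
      intro k
      congr 2
      · omega
      · push_cast; ring
    rw [h0]
    calc (∑ k ∈ range g, (p : ZipRing d) ^ (g + 1 - 1 - (k + 1)) *
            Nelt d p (i + ((k + 1 : ℕ) : ZMod d)))
          + (p : ZipRing d) ^ g * ((p : ZipRing d) * lcl d i - lcl d (i + 1))
        = (∑ k ∈ range g, (p : ZipRing d) ^ (g - 1 - k) * Nelt d p ((i + 1) + (k : ZMod d)))
          + (p : ZipRing d) ^ g * ((p : ZipRing d) * lcl d i - lcl d (i + 1)) := by
          rw [sum_congr rfl fun k _ => h1 k]
      _ = ((p : ZipRing d) ^ g * lcl d (i + 1) - lcl d ((i + 1) + (g : ZMod d)))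
          + (p : ZipRing d) ^ g * ((p : ZipRing d) * lcl d i - lcl d (i + 1)) := by rw [ih]
      _ = (p : ZipRing d) ^ (g + 1) * lcl d i - lcl d (i + ((g + 1 : ℕ) : ZMod d)) := by
          have : i + ((g + 1 : ℕ) : ZMod d) = (i + 1) + (g : ZMod d) := by push_cast; ring
          rw [this]; ring

lemma gapsum (p : ℕ) (hI : I.Nonempty) {i : ZMod d} :
    ∑ x ∈ gap hI i, (p : ZipRing d) ^ (nu hI x) * Nelt d p x
      = (p : ZipRing d) ^ (nu hI i + 1) * lcl d i - lcl d (nxt hI i) := by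
  rw [gap, sum_image (fun x hx y hy h =>
    gap_inj hI i (by simpa using hx) (by simpa using hy) h)]
  have h : ∀ k ∈ range (nu hI i + 1),
      (p : ZipRing d) ^ (nu hI (i + (k : ZMod d))) * Nelt d p (i + (k : ZMod d))
        = (p : ZipRing d) ^ (nu hI i + 1 - 1 - k) * Nelt d p (i + (k : ZMod d)) := by
    intro k hk
    rw [mem_range] at hk
    rw [nu_shift hI i (by omega), show nu hI i - k = nu hI i + 1 - 1 - k by omega]
  rw [sum_congr rfl h, telescope p (nu hI i + 1) i, nxt]

lemma exists_nxt_into (hI : I.Nonempty) {t : Finset (ZMod d)} (ht : t ⊆ I)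
    (hne : t.Nonempty) (hlt : t ≠ I) : ∃ j, j ∈ I ∧ j ∉ t ∧ nxt hI j ∈ t := by
  by_contra hcl
  push_neg at hcl
  have himg : (I \ t).image (nxt hI) = I \ t := by
    apply eq_of_subset_of_card_le
    · intro x hx
      rw [mem_image] at hx
      obtain ⟨j, hj, rfl⟩ := hx
      rw [mem_sdiff] at hj
      rw [mem_sdiff]
      exact ⟨nxt_mem hI j, hcl j hj.1 hj.2⟩
    · rw [card_image_of_injOn ((nxt_inj hI).mono (by
        intro x hx; rw [mem_coe, mem_sdiff] at hx; exact hx.1))]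
  have hnxtt : ∀ j ∈ t, nxt hI j ∈ t := by
    intro j hj
    by_contra hnj
    have h1 : nxt hI j ∈ I \ t := mem_sdiff.mpr ⟨nxt_mem hI j, hnj⟩
    rw [← himg, mem_image] at h1
    obtain ⟨j', hj', heq⟩ := h1
    rw [mem_sdiff] at hj'
    have : j' = j := nxt_inj hI hj'.1 (ht hj) heq
    exact hj'.2 (this ▸ hj)
  have step : ∀ x : ZMod d, prv hI x ∈ t → prv hI (x + 1) ∈ t := by
    intro x hx
    obtain ⟨a, ha⟩ : ∃ a, prv hI x = a := ⟨_, rfl⟩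
    rw [ha] at hx
    have haI : a ∈ I := ht hx
    have hxg : x ∈ gap hI a := (mem_gap_iff hI haI).mpr ha
    obtain ⟨k, hk, hxe, _⟩ := gap_rep hI hxg
    rcases Nat.lt_or_ge k (nu hI a) with hlt' | hge
    · have hstep : x + 1 = a + ((k + 1 : ℕ) : ZMod d) := by rw [hxe]; push_cast; ring
      rw [hstep, prv_add hI haI (by omega)]
      exact hx
    · have hkeq : k = nu hI a := le_antisymm hk hge
      have hstep : x + 1 = nxt hI a := by
        rw [hxe, hkeq, nxt]; push_cast; ring
      rw [hstep, prv_of_mem hI (nxt_mem hI _)]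
      exact hnxtt _ hx
  have hiter : ∀ n : ℕ, ∀ x : ZMod d, prv hI x ∈ t → prv hI (x + (n : ZMod d)) ∈ t := by
    intro n
    induction n with
    | zero => intro x hx; simpa using hx
    | succ n ih =>
      intro x hx
      have : x + ((n + 1 : ℕ) : ZMod d) = (x + (n : ZMod d)) + 1 := by push_cast; ring
      rw [this]
      exact step _ (ih x hx)
  obtain ⟨i0, hi0⟩ := hne
  obtain ⟨j0, hj0I, hj0⟩ : ∃ j0, j0 ∈ I ∧ j0 ∉ t := by
    by_contra h
    push_neg at h
    exact hlt (subset_antisymm ht h)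
  have hrep : j0 = i0 + (((j0 - i0).val : ℕ) : ZMod d) := by
    rw [ZMod.natCast_val, ZMod.cast_id]; ring
  have h1 : prv hI i0 ∈ t := by rw [prv_of_mem hI (ht hi0)]; exact hi0
  have h2 : prv hI j0 ∈ t := by rw [hrep]; exact hiter _ i0 h1
  rw [prv_of_mem hI hj0I] at h2
  exact hj0 h2

lemma prod_A (p : ℕ) (hI : I.Nonempty) :
    ∏ i ∈ I, ((p : ZipRing d) ^ (nu hI i + 1) * lcl d i - lcl d (nxt hI i))
      = (p : ZipRing d) ^ d * (∏ i ∈ I, lcl d i)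
        + (-1 : ZipRing d) ^ I.card * ∏ i ∈ I, lcl d i := by
  have hexp : ∏ i ∈ I, ((p : ZipRing d) ^ (nu hI i + 1) * lcl d i - lcl d (nxt hI i))
      = ∑ t ∈ I.powerset, (∏ i ∈ t, (p : ZipRing d) ^ (nu hI i + 1) * lcl d i)
          * ∏ i ∈ I \ t, (- lcl d (nxt hI i)) := by
    rw [← prod_add]
    exact prod_congr rfl fun i _ => by ring
  rw [hexp]
  have hpair : ({∅, I} : Finset (Finset (ZMod d))) ⊆ I.powerset := by
    intro t ht
    rw [mem_insert, mem_singleton] at ht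
    rcases ht with rfl | rfl
    · exact empty_mem_powerset _
    · exact mem_powerset_self _
  have hvan : ∀ t ∈ I.powerset, t ∉ ({∅, I} : Finset (Finset (ZMod d))) →
      (∏ i ∈ t, (p : ZipRing d) ^ (nu hI i + 1) * lcl d i)
        * ∏ i ∈ I \ t, (- lcl d (nxt hI i)) = 0 := by
    intro t htp hts
    rw [mem_powerset] at htp
    rw [mem_insert, mem_singleton] at hts
    push_neg at hts
    obtain ⟨j, hjI, hjt, hnjt⟩ := exists_nxt_into hI htp
      hts.1 hts.2
    have h1 : lcl d (nxt hI j) ∣ ∏ i ∈ t, (p : ZipRing d) ^ (nu hI i + 1) * lcl d i :=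
      dvd_trans (dvd_mul_left _ _) (dvd_prod_of_mem _ hnjt)
    have h2 : lcl d (nxt hI j) ∣ ∏ i ∈ I \ t, (- lcl d (nxt hI i)) :=
      dvd_trans ((dvd_neg).mpr dvd_rfl) (dvd_prod_of_mem _ (mem_sdiff.mpr ⟨hjI, hjt⟩))
    obtain ⟨q1, hq1⟩ := h1
    obtain ⟨q2, hq2⟩ := h2
    rw [hq1, hq2, show lcl d (nxt hI j) * q1 * (lcl d (nxt hI j) * q2)
        = (lcl d (nxt hI j) * lcl d (nxt hI j)) * (q1 * q2) from by ring,
      lsq, zero_mul]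
  rw [← sum_subset hpair hvan]
  have hIne : (∅ : Finset (ZMod d)) ≠ I := fun h => hI.ne_empty h.symm
  rw [sum_pair hIne]
  have hterm0 : (∏ i ∈ (∅ : Finset (ZMod d)), (p : ZipRing d) ^ (nu hI i + 1) * lcl d i)
      * ∏ i ∈ I \ ∅, (- lcl d (nxt hI i))
      = (-1 : ZipRing d) ^ I.card * ∏ i ∈ I, lcl d i := by
    rw [prod_empty, one_mul, sdiff_empty]
    have : ∀ i ∈ I, - lcl d (nxt hI i) = (-1 : ZipRing d) * lcl d (nxt hI i) :=
      fun i _ => by ring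
    rw [prod_congr rfl this, prod_mul_distrib, prod_const, prod_lcl_nxt hI]
  have htermI : (∏ i ∈ I, (p : ZipRing d) ^ (nu hI i + 1) * lcl d i)
      * ∏ i ∈ I \ I, (- lcl d (nxt hI i))
      = (p : ZipRing d) ^ d * ∏ i ∈ I, lcl d i := by
    rw [sdiff_self]
    simp only [Finset.bot_eq_empty, prod_empty, mul_one]
    rw [prod_mul_distrib, prod_pow_eq_pow_sum, sum_gaplen hI]
  rw [hterm0, htermI]
  ring

/-- image of a pi-function -/
def Ffun (hI : I.Nonempty) (f : ∀ a : ZMod d, a ∈ I → ZMod d) : Finset (ZMod d) :=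
  I.attach.image (fun a => f a.1 a.2)

lemma pi_mem_gap (hI : I.Nonempty) {f : ∀ a : ZMod d, a ∈ I → ZMod d}
    (hf : f ∈ I.pi (fun i => gap hI i)) : ∀ (a : ZMod d) (ha : a ∈ I), f a ha ∈ gap hI a :=
  fun a ha => Finset.mem_pi.mp hf a ha

lemma pi_prv (hI : I.Nonempty) {f : ∀ a : ZMod d, a ∈ I → ZMod d}
    (hf : f ∈ I.pi (fun i => gap hI i)) : ∀ (a : ZMod d) (ha : a ∈ I), prv hI (f a ha) = a :=
  fun a ha => (mem_gap_iff hI ha).mp (pi_mem_gap hI hf a ha)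

lemma pi_inj (hI : I.Nonempty) {f : ∀ a : ZMod d, a ∈ I → ZMod d}
    (hf : f ∈ I.pi (fun i => gap hI i)) :
    ∀ a ∈ I.attach, ∀ b ∈ I.attach, f a.1 a.2 = f b.1 b.2 → a = b := by
  intro a _ b _ h
  have h1 := pi_prv hI hf a.1 a.2
  have h2 := pi_prv hI hf b.1 b.2
  exact Subtype.ext (by rw [← h1, ← h2, h])

lemma card_Ffun (hI : I.Nonempty) {f : ∀ a : ZMod d, a ∈ I → ZMod d}
    (hf : f ∈ I.pi (fun i => gap hI i)) : (Ffun hI f).card = I.card := by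
  rw [Ffun, card_image_of_injOn (fun a ha b hb h => pi_inj hI hf a (by simpa using ha)
    b (by simpa using hb) h), card_attach]

lemma mem_Ffun (hI : I.Nonempty) (f : ∀ a : ZMod d, a ∈ I → ZMod d)
    {i : ZMod d} (hi : i ∈ I) : f i hi ∈ Ffun hI f :=
  mem_image_of_mem _ (mem_attach _ ⟨i, hi⟩)

lemma fiber_eq (hI : I.Nonempty) {f g : ∀ a : ZMod d, a ∈ I → ZMod d}
    (hf : f ∈ I.pi (fun i => gap hI i)) (hg : g ∈ I.pi (fun i => gap hI i))
    (h : Ffun hI f = Ffun hI g) : f = g := by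
  set J := Ffun hI f with hJ
  have hcard : J.card = I.card := card_Ffun hI hf
  have hfibcard := card_eq_sum_card_fiberwise (f := prv hI) (s := J) (t := I)
    (fun x _ => prv_mem hI x)
  have hone : ∀ i ∈ I, (J.filter (fun x => prv hI x = i)).card = 1 := by
    by_contra hc
    push_neg at hc
    obtain ⟨i0, hi0, hne1⟩ := hc
    have hge : ∀ i ∈ I, 1 ≤ (J.filter (fun x => prv hI x = i)).card := by
      intro i hi
      refine card_pos.mpr ⟨f i hi, ?_⟩
      rw [mem_filter]
      exact ⟨mem_Ffun hI f hi, pi_prv hI hf i hi⟩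
    have hlt : ∑ _i ∈ I, 1 < ∑ i ∈ I, (J.filter (fun x => prv hI x = i)).card :=
      sum_lt_sum hge ⟨i0, hi0, lt_of_le_of_ne (hge i0 hi0) (Ne.symm hne1)⟩
    rw [← hfibcard, hcard] at hlt
    simp at hlt
  funext a ha
  have key : ∀ (h' : ∀ (a : ZMod d) (ha : a ∈ I), f a ha ∈ J) , f a ha = g a ha := by
    intro h'
    have h1 : f a ha ∈ J.filter (fun x => prv hI x = a) :=
      mem_filter.mpr ⟨mem_Ffun hI f ha, pi_prv hI hf a ha⟩
    have h2 : g a ha ∈ J.filter (fun x => prv hI x = a) := by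
      rw [mem_filter]
      refine ⟨?_, pi_prv hI hg a ha⟩
      have := mem_Ffun hI g ha
      rw [← h] at this
      exact this
    obtain ⟨x, hx⟩ := card_eq_one.mp (hone a ha)
    rw [hx, mem_singleton] at h1 h2
    rw [h1, h2]
  exact key (fun a ha => mem_Ffun hI f ha)

end Aux

/-- Explicit form of the strata-effectivity of `L_I`: the coefficient of `N_I` is
`p^(d−|I|)/(p^d+(−1)^|I|)` and every other nonzero coefficient is `p^e/(p^d+(−1)^|I|)`
with `0 ≤ e ≤ d−|I|−1`. -/


theorem stmt1 (d p : ℕ) [NeZero d] (hp : p.Prime) (I : Finset (ZMod d))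
    (hI : I.Nonempty) :
    ∃ a : Finset (ZMod d) → ℚ,
      Lmon d I =
        (∑ J ∈ Finset.univ.powerset.filter (fun J => J.card = I.card),
          a J • Nmon d p J) ∧
      a I = (p : ℚ) ^ (d - I.card) / ((p : ℚ) ^ d + (-1) ^ I.card) ∧
      ∀ J : Finset (ZMod d), J.card = I.card → J ≠ I → a J ≠ 0 →
        ∃ e : ℕ, (e : ℤ) ≤ (d : ℤ) - I.card - 1 ∧
          a J = (p : ℚ) ^ e / ((p : ℚ) ^ d + (-1) ^ I.card) := by
  classical
  have hrd : I.card ≤ d := card_le hI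
  have hr1 : 1 ≤ I.card := card_pos.mpr hI
  set D : ℚ := (p : ℚ) ^ d + (-1) ^ I.card with hD
  have hp1 : (1 : ℚ) < (p : ℚ) := by exact_mod_cast hp.one_lt
  have hDpos : 0 < D := by
    have hpd : (1 : ℚ) < (p : ℚ) ^ d := one_lt_pow₀ hp1 (NeZero.ne d)
    rcases Nat.even_or_odd I.card with he | ho
    · rw [hD, he.neg_one_pow]
      positivity
    · rw [hD, ho.neg_one_pow]
      linarith
  have hDne : D ≠ 0 := ne_of_gt hDpos
  set c : (∀ a : ZMod d, a ∈ I → ZMod d) → ℚ :=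
    fun f => (p : ℚ) ^ (∑ a ∈ I.attach, nu hI (f a.1 a.2)) with hc
  set Pi0 := I.pi (fun i => gap hI i) with hPi0
  set S := Finset.univ.powerset.filter
    (fun J : Finset (ZMod d) => J.card = I.card) with hS
  have hsmul : ∀ (q : ℚ) (x : ZipRing d), q • x = algebraMap ℚ (ZipRing d) q * x :=
    fun q x => Algebra.smul_def q x
  refine ⟨fun J => (∑ f ∈ Pi0.filter (fun f => Ffun hI f = J), c f) / D, ?_, ?_, ?_⟩
  · -- main sum identity
    have hmaps : ∀ f ∈ Pi0, Ffun hI f ∈ S :=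
      fun f hf => mem_filter.mpr ⟨mem_powerset.mpr (subset_univ _), card_Ffun hI hf⟩
    have key : ∑ J ∈ S, (∑ f ∈ Pi0.filter (fun f => Ffun hI f = J), c f) • Nmon d p J
        = (algebraMap ℚ (ZipRing d) D) * Lmon d I := by
      have step1 : ∀ J ∈ S, (∑ f ∈ Pi0.filter (fun f => Ffun hI f = J), c f) • Nmon d p J
          = ∑ f ∈ Pi0.filter (fun f => Ffun hI f = J), c f • Nmon d p (Ffun hI f) := by
        intro J _
        rw [sum_smul]
        exact sum_congr rfl fun f hf => by rw [(mem_filter.mp hf).2]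
      rw [sum_congr rfl step1, sum_fiberwise_of_maps_to hmaps]
      have step3 : ∀ f ∈ Pi0, c f • Nmon d p (Ffun hI f)
          = ∏ a ∈ I.attach,
              ((p : ZipRing d) ^ (nu hI (f a.1 a.2)) * Nelt d p (f a.1 a.2)) := by
        intro f hf
        have hN : Nmon d p (Ffun hI f) = ∏ a ∈ I.attach, Nelt d p (f a.1 a.2) := by
          rw [Nmon, Ffun, prod_image (pi_inj hI hf)]
        rw [hN, hsmul, hc]
        rw [map_pow, map_natCast]
        rw [← prod_pow_eq_pow_sum, ← prod_mul_distrib]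
      rw [sum_congr rfl step3, hPi0,
        ← Finset.prod_sum I (fun i => gap hI i)
          (fun _ x => (p : ZipRing d) ^ nu hI x * Nelt d p x)]
      have step5 : ∀ i ∈ I, (∑ x ∈ gap hI i, (p : ZipRing d) ^ (nu hI x) * Nelt d p x)
          = (p : ZipRing d) ^ (nu hI i + 1) * lcl d i - lcl d (nxt hI i) :=
        fun i _ => gapsum p hI
      rw [prod_congr rfl step5, prod_A p hI]
      have : algebraMap ℚ (ZipRing d) D
          = (p : ZipRing d) ^ d + (-1 : ZipRing d) ^ I.card := by
        rw [hD, map_add, map_pow, map_natCast, map_pow, map_neg, map_one]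
      rw [this, Lmon]
      ring
    calc Lmon d I = (D⁻¹ * D) • Lmon d I := by
          rw [inv_mul_cancel₀ hDne, one_smul]
      _ = D⁻¹ • (algebraMap ℚ (ZipRing d) D * Lmon d I) := by
          rw [mul_smul, hsmul D]
      _ = D⁻¹ • ∑ J ∈ S, (∑ f ∈ Pi0.filter (fun f => Ffun hI f = J), c f) • Nmon d p J := by
          rw [key]
      _ = ∑ J ∈ S, ((∑ f ∈ Pi0.filter (fun f => Ffun hI f = J), c f) / D) • Nmon d p J := by
          rw [smul_sum]
          exact sum_congr rfl fun J _ => by rw [← mul_smul, div_eq_inv_mul]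
  · -- value at I
    have hf0mem : (fun (a : ZMod d) (_ : a ∈ I) => a) ∈ Pi0 :=
      Finset.mem_pi.mpr (fun a _ => self_mem_gap hI a)
    have hF0 : Ffun hI (fun (a : ZMod d) (_ : a ∈ I) => a) = I := by
      rw [Ffun]
      simp
    have hfib : Pi0.filter (fun f => Ffun hI f = I) = {fun (a : ZMod d) (_ : a ∈ I) => a} := by
      ext f
      simp only [mem_filter, mem_singleton]
      constructor
      · rintro ⟨hf, hFf⟩
        exact fiber_eq hI hf hf0mem (hFf.trans hF0.symm)
      · rintro rfl
        exact ⟨hf0mem, hF0⟩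
    show (∑ f ∈ Pi0.filter (fun f => Ffun hI f = I), c f) / D
      = (p : ℚ) ^ (d - I.card) / D
    rw [hfib, sum_singleton]
    show ((p : ℚ) ^ (∑ a ∈ I.attach, nu hI a.1)) / D = _
    rw [sum_attach I (fun i => nu hI i), sum_nu hI]
  · -- other coefficients
    intro J hJcard hJne haJ
    have haJ' : (∑ f ∈ Pi0.filter (fun f => Ffun hI f = J), c f) / D ≠ 0 := haJ
    have hfibne : (Pi0.filter (fun f => Ffun hI f = J)).Nonempty := by
      by_contra h
      rw [not_nonempty_iff_eq_empty] at h
      rw [h, sum_empty, zero_div] at haJ'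
      exact haJ' rfl
    obtain ⟨f, hfmem⟩ := hfibne
    have hf : f ∈ Pi0 := (mem_filter.mp hfmem).1
    have hFf : Ffun hI f = J := (mem_filter.mp hfmem).2
    have hfib : Pi0.filter (fun f => Ffun hI f = J) = {f} := by
      ext g
      simp only [mem_filter, mem_singleton]
      constructor
      · rintro ⟨hg, hFg⟩
        exact fiber_eq hI hg hf (hFg.trans hFf.symm)
      · rintro rfl
        exact ⟨hf, hFf⟩
    refine ⟨∑ a ∈ I.attach, nu hI (f a.1 a.2), ?_, ?_⟩
    · -- exponent bound
      have hle : ∀ a ∈ I.attach, nu hI (f a.1 a.2) ≤ nu hI a.1 := by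
        intro a _
        obtain ⟨k, hk, _, hshift⟩ := gap_rep hI (pi_mem_gap hI hf a.1 a.2)
        omega
      have hex : ∃ a ∈ I.attach, nu hI (f a.1 a.2) < nu hI a.1 := by
        by_contra h
        push_neg at h
        apply hJne
        rw [← hFf, Ffun]
        have heq : ∀ a ∈ I.attach, f a.1 a.2 = a.1 := by
          intro a ha
          obtain ⟨k, hk, hrep, hshift⟩ := gap_rep hI (pi_mem_gap hI hf a.1 a.2)
          have := h a ha
          have hk0 : k = 0 := by omega
          rw [hrep, hk0]
          simp
        rw [image_congr (fun a ha => heq a ha)]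
        simp
      have hlt : ∑ a ∈ I.attach, nu hI (f a.1 a.2) < ∑ a ∈ I.attach, nu hI a.1 :=
        sum_lt_sum hle hex
      have hsum : ∑ a ∈ I.attach, nu hI a.1 = d - I.card := by
        rw [sum_attach I (fun i => nu hI i), sum_nu hI]
      rw [hsum] at hlt
      omega
    · show (∑ g ∈ Pi0.filter (fun g => Ffun hI g = J), c g) / D
        = ((p : ℚ) ^ (∑ a ∈ I.attach, nu hI (f a.1 a.2))) / D
      rw [hfib, sum_singleton]
end
end

section
/- For all subsets I, J ⊆ ℤ/d with |I| = |J|: if I = J then N_I · P_{J^c} = (p^d + (−1)^{|I|}) · L_{ℤ/d} in R, and if I ≠ J then N_I · P_{J^c} = 0 in R. -/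
open MvPolynomial Finset

noncomputable section

lemma lcl_sq (d : ℕ) (i : ZMod d) : lcl d i * lcl d i = 0 := by
  rw [lcl, ← map_mul, Ideal.Quotient.eq_zero_iff_mem, ← sq]
  exact Ideal.subset_span ⟨i, rfl⟩

lemma NP_zero (d p : ℕ) (i : ZMod d) : Nelt d p i * Pelt d p i = 0 := by
  unfold Nelt Pelt
  linear_combination (p : ZipRing d) ^ 2 * lcl_sq d i - lcl_sq d (i + 1)

lemma quad_zero {R : Type*} [CommRing R] (a A B u v : R) (h : a * a = 0) :
    u * a * A * (v * a * B) = 0 := by linear_combination u * v * A * B * h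

lemma exists_boundary (d : ℕ) [NeZero d] (t : Finset (ZMod d)) (h1 : t ≠ ∅) (h2 : t ≠ univ) :
    ∃ i, i ∉ t ∧ i + 1 ∈ t := by
  by_contra h
  push_neg at h
  obtain ⟨j, hj⟩ := Finset.nonempty_iff_ne_empty.2 h1
  have hk : ∃ k, k ∉ t := by
    by_contra hk
    push_neg at hk
    exact h2 (Finset.eq_univ_iff_forall.2 hk)
  obtain ⟨k, hkt⟩ := hk
  have step : ∀ n : ℕ, k + (n : ZMod d) ∉ t := by
    intro n
    induction n with
    | zero => simpa using hkt
    | succ m ih =>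
      have := h _ ih
      have hc : k + ((m : ℕ) + 1 : ℕ) = k + (m : ZMod d) + 1 := by push_cast; ring
      rwa [hc]
  have hjk : k + (((j - k).val : ℕ) : ZMod d) = j := by
    rw [ZMod.natCast_rightInverse (j - k)]; ring
  exact step (j - k).val (by rw [hjk]; exact hj)

lemma prod_shift (d : ℕ) [NeZero d] :
    ∏ i : ZMod d, lcl d (i + 1) = Lmon d Finset.univ := by
  rw [Lmon]
  exact Fintype.prod_equiv (Equiv.addRight (1 : ZMod d)) _ _ (fun i => rfl)

/-- For equinumerous `I, J ⊆ ℤ/d`: `N_I · P_{J^c} = (p^d + (−1)^{|I|}) · L_{ℤ/d}` if `I = J`,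
and `N_I · P_{J^c} = 0` if `I ≠ J`. -/
theorem stmt3 (d p : ℕ) [NeZero d] (hp : p.Prime) (I J : Finset (ZMod d))
    (hIJ : I.card = J.card) :
    (I = J →
      Nmon d p I * Pmon d p Jᶜ =
        ((p : ℚ) ^ d + (-1) ^ I.card) • Lmon d Finset.univ) ∧
    (I ≠ J → Nmon d p I * Pmon d p Jᶜ = 0) := by
  constructor
  · rintro rfl
    set ε : ZMod d → ZipRing d := fun i => if i ∈ I then (-1 : ZipRing d) else 1 with hε
    set f : ZMod d → ZipRing d := fun i => (p : ZipRing d) * lcl d i + ε i * lcl d (i + 1) with hf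
    have h1 : Nmon d p I * Pmon d p Iᶜ = ∏ i, f i := by
      rw [← Finset.prod_mul_prod_compl I f, Nmon, Pmon]
      congr 1
      · refine Finset.prod_congr rfl fun i hi => ?_
        simp only [hf, hε, Nelt, if_pos hi]
        ring
      · exact Finset.prod_congr rfl fun i hi => by
          simp only [Finset.mem_compl] at hi
          simp [hf, hε, Pelt, hi]
    rw [h1, hf]
    simp only []
    rw [Finset.prod_add]
    have hzero : ∀ t ∈ Finset.univ.powerset,
        t ∉ ({∅, Finset.univ} : Finset (Finset (ZMod d))) →
        (∏ i ∈ t, (p : ZipRing d) * lcl d i) * ∏ i ∈ Finset.univ \ t, ε i * lcl d (i + 1) = 0 := by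
      intro t _ ht
      simp only [Finset.mem_insert, Finset.mem_singleton, not_or] at ht
      obtain ⟨i, hit, hit1⟩ := exists_boundary d t ht.1 ht.2
      have hi2 : i ∈ Finset.univ \ t := by simp [hit]
      rw [← Finset.mul_prod_erase t _ hit1, ← Finset.mul_prod_erase _ _ hi2]
      exact quad_zero (lcl d (i + 1)) _ _ _ _ (lcl_sq d (i + 1))
    have hsub : ({∅, Finset.univ} : Finset (Finset (ZMod d))) ⊆ Finset.univ.powerset := by
      intro t ht; simp
    rw [← Finset.sum_subset hsub hzero]
    have hne : (∅ : Finset (ZMod d)) ≠ Finset.univ := by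
      have := Finset.univ_nonempty (α := ZMod d)
      exact fun h => by simp [← h] at this
    rw [Finset.sum_pair hne]
    have hεprod : ∏ i, ε i = (-1 : ZipRing d) ^ I.card := by
      rw [hε]
      rw [Finset.prod_ite_mem Finset.univ I fun _ => (-1 : ZipRing d)]
      simp [Finset.prod_const]
    have hcard : Fintype.card (ZMod d) = d := ZMod.card d
    rw [Finset.sdiff_empty, Finset.sdiff_self, Finset.prod_empty, Finset.prod_empty,
      Finset.prod_mul_distrib, Finset.prod_mul_distrib, Finset.prod_const, hεprod,
      prod_shift d, Finset.card_univ, hcard]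
    have hsm0 : ((p : ℚ) ^ d + (-1) ^ I.card) • Lmon d Finset.univ
        = algebraMap ℚ (ZipRing d) ((p : ℚ) ^ d + (-1) ^ I.card) * Lmon d Finset.univ := by
      exact Algebra.smul_def ((p : ℚ) ^ d + (-1) ^ I.card) (Lmon d Finset.univ)
    have hsm : ((p : ℚ) ^ d + (-1) ^ I.card) • Lmon d Finset.univ
        = ((p : ZipRing d) ^ d + (-1) ^ I.card) * Lmon d Finset.univ := by
      rw [hsm0, map_add, map_pow, map_pow, map_natCast, map_neg, map_one]
    rw [hsm, Lmon]
    ring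
  · intro hne
    have : ∃ i, i ∈ I ∧ i ∉ J := by
      by_contra h
      push_neg at h
      exact hne (Finset.eq_of_subset_of_card_le h hIJ.ge)
    obtain ⟨i, hiI, hiJ⟩ := this
    have hiJc : i ∈ Jᶜ := Finset.mem_compl.2 hiJ
    rw [Nmon, Pmon, ← Finset.mul_prod_erase I _ hiI, ← Finset.mul_prod_erase Jᶜ _ hiJc,
      mul_mul_mul_comm, NP_zero, zero_mul]
end
end
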